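/- Under the standing assumptions, for any Palais–Smale sequence {u_k} of J_λ at level c (i.e. J_λ(u_k) → c and J_λ'(u_k) → 0 in the dual of E_λ), one has lim_{k→∞} ‖u_k‖²_{E_λ} = (2p/(p−2)) c. Moreover there is a constant C₁ > 0 independent of λ such that either c = 0 or c > C₁. -/

import Mathlib

open Filter Topology

structure GraphData (V : Type*) where
  ω : V → V → ℝ
  μ : V → ℝ
  sym : ∀ x y, ω x y = ω y x
  nonneg : ∀ x y, 0 ≤ ω x y
  loopless : ∀ x, ω x x = 0
  locfin : ∀ x, {y | ω x y ≠ 0}.Finite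
  μpos : ∀ x, 0 < μ x

variable {V : Type*}

noncomputable def GraphData.lap (g : GraphData V) (u : V → ℝ) (x : V) : ℝ :=
  (1 / g.μ x) * ∑' y, g.ω x y * (u y - u x)

noncomputable def GraphData.grad (g : GraphData V) (u v : V → ℝ) (x : V) : ℝ :=
  (1 / (2 * g.μ x)) * ∑' y, g.ω x y * (u y - u x) * (v y - v x)

noncomputable def GraphData.integral (g : GraphData V) (f : V → ℝ) : ℝ :=
  ∑' x, g.μ x * f x

def GraphData.G (g : GraphData V) : SimpleGraph V where
  Adj x y := 0 < g.ω x y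
  symm := ⟨by intro x y h; show 0 < g.ω y x; rwa [g.sym y x]⟩
  loopless := ⟨by intro x h; simp [g.loopless x] at h⟩

noncomputable def GraphData.enormSq (g : GraphData V) (a : V → ℝ) (lam : ℝ) (u : V → ℝ) : ℝ :=
  ∑' x, g.μ x * ((g.lap u x) ^ 2 + g.grad u u x + (lam * a x + 1) * (u x) ^ 2)

def GraphData.memE (g : GraphData V) (a : V → ℝ) (lam : ℝ) (u : V → ℝ) : Prop :=
  Summable fun x => g.μ x * ((g.lap u x) ^ 2 + g.grad u u x + (lam * a x + 1) * (u x) ^ 2)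

noncomputable def GraphData.lpInt (g : GraphData V) (p : ℝ) (u : V → ℝ) : ℝ :=
  ∑' x, g.μ x * |u x| ^ p

noncomputable def GraphData.Jlam (g : GraphData V) (a : V → ℝ) (lam p : ℝ) (u : V → ℝ) : ℝ :=
  (1 / 2) * g.enormSq a lam u - (1 / p) * g.lpInt p u

def GraphData.Nehari (g : GraphData V) (a : V → ℝ) (lam p : ℝ) : Set (V → ℝ) :=
  {u | u ≠ 0 ∧ g.memE a lam u ∧ g.enormSq a lam u = g.lpInt p u}

noncomputable def GraphData.Jderiv (g : GraphData V) (a : V → ℝ) (lam p : ℝ) (u φ : V → ℝ) : ℝ :=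
  (∑' x, g.μ x * (g.lap u x * g.lap φ x + g.grad u φ x + (lam * a x + 1) * u x * φ x))
    - ∑' x, g.μ x * (|u x| ^ (p - 2) * u x * φ x)

def GraphData.bdry (g : GraphData V) (Ω : Set V) : Set V :=
  {y | y ∉ Ω ∧ ∃ x ∈ Ω, 0 < g.ω x y}

noncomputable def GraphData.hnormSq (g : GraphData V) (Ω : Set V) (u : V → ℝ) : ℝ :=
  (∑' x : ↥(Ω ∪ g.bdry Ω), g.μ x * ((g.lap u x) ^ 2 + g.grad u u x))
    + ∑' x : Ω, g.μ x * (u x) ^ 2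

noncomputable def GraphData.lpIntO (g : GraphData V) (Ω : Set V) (p : ℝ) (u : V → ℝ) : ℝ :=
  ∑' x : Ω, g.μ x * |u x| ^ p

noncomputable def GraphData.JOmega (g : GraphData V) (Ω : Set V) (p : ℝ) (u : V → ℝ) : ℝ :=
  (1 / 2) * g.hnormSq Ω u - (1 / p) * g.lpIntO Ω p u

def GraphData.memH (g : GraphData V) (Ω : Set V) (u : V → ℝ) : Prop :=
  ∀ x ∉ Ω, u x = 0

def GraphData.NehariO (g : GraphData V) (Ω : Set V) (p : ℝ) : Set (V → ℝ) :=
  {u | u ≠ 0 ∧ g.memH Ω u ∧ g.hnormSq Ω u = g.lpIntO Ω p u}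

noncomputable def GraphData.JderivO (g : GraphData V) (Ω : Set V) (p : ℝ) (u φ : V → ℝ) : ℝ :=
  (∑' x : ↥(Ω ∪ g.bdry Ω), g.μ x * (g.lap u x * g.lap φ x + g.grad u φ x))
    + (∑' x : Ω, g.μ x * (u x * φ x))
    - ∑' x : Ω, g.μ x * (|u x| ^ (p - 2) * u x * φ x)

/-- Palais–Smale sequences: norm identity and energy dichotomy. -/
theorem stmt11 (g : GraphData V) (μmin C lam p ηp c : ℝ) (hμmin : 0 < μmin)
    (hμ : ∀ x, μmin ≤ g.μ x) (hω : ∀ x, ∑' y, g.ω x y ≤ C) (hconn : g.G.Connected)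
    (a : V → ℝ) (ha : ∀ x, 0 ≤ a x) (hlam : 1 < lam) (hp : 2 < p) (hηp : 0 < ηp)
    (hemb : ∀ v, g.memE a lam v →
      (g.lpInt p v) ^ (1 / p) ≤ ηp * (g.enormSq a lam v) ^ ((1 : ℝ) / 2))
    (u : ℕ → V → ℝ) (hmem : ∀ k, g.memE a lam (u k))
    (hJ : Filter.Tendsto (fun k => g.Jlam a lam p (u k)) Filter.atTop (nhds c))
    (hJ' : ∃ ε : ℕ → ℝ, Filter.Tendsto ε Filter.atTop (nhds 0) ∧
      ∀ k, ∀ φ, g.memE a lam φ →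
        |g.Jderiv a lam p (u k) φ| ≤ ε k * (g.enormSq a lam φ) ^ ((1 : ℝ) / 2)) :
    Filter.Tendsto (fun k => g.enormSq a lam (u k)) Filter.atTop
        (nhds ((2 * p / (p - 2)) * c))
    ∧ (c = 0 ∨ ((p - 2) / (2 * p)) * (1 / (2 * ηp ^ p)) ^ (2 / (p - 2)) < c) := by
  obtain ⟨ε, hε0, hεb⟩ := hJ'
  have hp0 : (0:ℝ) < p := by linarith
  have hp2 : (0:ℝ) < p - 2 := by linarith
  set N : ℕ → ℝ := fun k => g.enormSq a lam (u k) with hNdef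
  set I : ℕ → ℝ := fun k => g.lpInt p (u k) with hIdef
  set L' : ℝ := 2 * p / (p - 2) with hL'def
  have hL' : (0:ℝ) < L' := by positivity
  -- nonnegativity of the energy norm
  have hNnn : ∀ k, 0 ≤ N k := by
    intro k
    apply tsum_nonneg
    intro x
    apply mul_nonneg (g.μpos x).le
    have hgrad : 0 ≤ g.grad (u k) (u k) x := by
      apply mul_nonneg (le_of_lt (one_div_pos.mpr (by linarith [g.μpos x])))
      apply tsum_nonneg
      intro y
      rw [mul_assoc]
      exact mul_nonneg (g.nonneg x y) (mul_self_nonneg _)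
    have hc : 0 ≤ lam * a x + 1 := by nlinarith [ha x]
    exact add_nonneg (add_nonneg (sq_nonneg _) hgrad) (mul_nonneg hc (sq_nonneg _))
  have hInn : ∀ k, 0 ≤ I k := by
    intro k
    apply tsum_nonneg
    intro x
    exact mul_nonneg (g.μpos x).le (Real.rpow_nonneg (abs_nonneg _) _)
  -- the derivative at u k in direction u k
  have habsrpow : ∀ t : ℝ, |t| ^ (p - 2) * t * t = |t| ^ p := by
    intro t
    rcases eq_or_ne t 0 with h | h
    · simp [h, Real.zero_rpow (by linarith : p - 2 ≠ 0),
        Real.zero_rpow (by linarith : p ≠ 0)]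
    · have habs : (0:ℝ) < |t| := abs_pos.mpr h
      have h2 : t * t = |t| ^ (2:ℝ) := by
        rw [show (2:ℝ) = ((2:ℕ):ℝ) by norm_num, Real.rpow_natCast]
        rw [sq_abs, sq]
      rw [mul_assoc, h2, ← Real.rpow_add habs]
      ring_nf
  have hDid : ∀ k, g.Jderiv a lam p (u k) (u k) = N k - I k := by
    intro k
    unfold GraphData.Jderiv
    congr 1
    · apply tsum_congr
      intro x
      ring
    · apply tsum_congr
      intro x
      rw [show |u k x| ^ (p-2) * u k x * u k x = |u k x| ^ p from habsrpow _]
  set D : ℕ → ℝ := fun k => N k - I k with hDdef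
  have hDb : ∀ k, |D k| ≤ ε k * (N k) ^ ((1:ℝ)/2) := by
    intro k
    have h := hεb k (u k) (hmem k)
    rwa [hDid k] at h
  have hJid : ∀ k, N k = L' * (g.Jlam a lam p (u k) - (1/p) * D k) := by
    intro k
    have hJeq : g.Jlam a lam p (u k) = 1/2 * N k - 1/p * I k := by
      simp only [GraphData.Jlam, hNdef, hIdef]
    rw [hJeq, hDdef, hL'def]
    field_simp
    ring
  set s : ℕ → ℝ := fun k => (N k) ^ ((1:ℝ)/2) with hsdef
  have hs_nn : ∀ k, 0 ≤ s k := fun k => Real.rpow_nonneg (hNnn k) _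
  have hs_sq : ∀ k, s k ^ 2 = N k := by
    intro k
    rw [hsdef]
    rw [← Real.rpow_natCast ((N k) ^ ((1:ℝ)/2)) 2, ← Real.rpow_mul (hNnn k)]
    norm_num
  -- bound s eventually
  set a0 : ℝ := L' * (|c| + 1) with ha0def
  set b0 : ℝ := L' * (1/p) with hb0def
  have ha0 : 0 ≤ a0 := by positivity
  have hb0 : 0 ≤ b0 := by positivity
  set M : ℝ := max 1 (a0 + b0) with hMdef
  have hsM : ∀ᶠ k in atTop, s k ≤ M := by
    have hJb : ∀ᶠ k in atTop, g.Jlam a lam p (u k) ≤ |c| + 1 :=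
      hJ.eventually (eventually_le_nhds (lt_of_le_of_lt (le_abs_self c) (lt_add_one _)))
    have hεs : ∀ᶠ k in atTop, ε k ≤ 1 := hε0.eventually (eventually_le_nhds one_pos)
    filter_upwards [hJb, hεs] with k hJk hεk
    have h1p : (0:ℝ) ≤ 1/p := by positivity
    have hD1 : -(D k) ≤ ε k * s k := (neg_le_abs _).trans (hDb k)
    have h1 : N k ≤ L' * ((|c| + 1) + (1/p) * (ε k * s k)) := by
      rw [hJid k]
      apply mul_le_mul_of_nonneg_left _ hL'.le
      have := mul_le_mul_of_nonneg_left hD1 h1p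
      linarith
    have h2 : ε k * s k ≤ s k := by
      nlinarith [hs_nn k]
    have h3 : s k ^ 2 ≤ a0 + b0 * s k := by
      rw [hs_sq k]
      have := mul_le_mul_of_nonneg_left h2 (mul_nonneg hL'.le h1p)
      calc N k ≤ L' * ((|c| + 1) + (1/p) * (ε k * s k)) := h1
        _ = a0 + (L' * (1/p)) * (ε k * s k) := by rw [ha0def]; ring
        _ ≤ a0 + b0 * s k := by rw [hb0def]; linarith
    by_contra hcon
    push_neg at hcon
    have hM1 : (1:ℝ) ≤ M := le_max_left _ _
    have hMab : a0 + b0 ≤ M := le_max_right _ _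
    have hs1 : 1 < s k := lt_of_le_of_lt hM1 hcon
    nlinarith
  -- D tends to 0
  have hDlim : Tendsto D atTop (nhds 0) := by
    have hbnd : ∀ᶠ k in atTop, ‖D k‖ ≤ |ε k| * M := by
      filter_upwards [hsM] with k hk
      calc ‖D k‖ = |D k| := rfl
        _ ≤ ε k * s k := hDb k
        _ ≤ |ε k| * s k := mul_le_mul_of_nonneg_right (le_abs_self _) (hs_nn k)
        _ ≤ |ε k| * M := mul_le_mul_of_nonneg_left hk (abs_nonneg _)
    have hz : Tendsto (fun k => |ε k| * M) atTop (nhds 0) := by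
      have := (hε0.abs).mul_const M
      simpa using this
    exact squeeze_zero_norm' hbnd hz
  -- main limit
  have hNlim : Tendsto N atTop (nhds (L' * c)) := by
    have hbase : Tendsto (fun k => g.Jlam a lam p (u k) - (1/p) * D k) atTop
        (nhds (c - (1/p) * 0)) := hJ.sub (hDlim.const_mul (1/p))
    have := hbase.const_mul L'
    have h2 : L' * (c - (1/p) * 0) = L' * c := by ring
    rw [h2] at this
    exact this.congr (fun k => (hJid k).symm)
  refine ⟨hNlim, ?_⟩
  rcases eq_or_ne c 0 with hc0 | hc0
  · exact Or.inl hc0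
  right
  -- c > 0
  have hLnn : 0 ≤ L' * c := ge_of_tendsto' hNlim hNnn
  have hcpos : 0 < c := by
    rcases lt_trichotomy c 0 with h | h | h
    · exfalso; nlinarith
    · exact absurd h hc0
    · exact h
  have hL0 : 0 < L' * c := mul_pos hL' hcpos
  -- embedding inequality, p-th powers
  have hIle : ∀ k, I k ≤ ηp ^ p * (N k) ^ (p/2) := by
    intro k
    have h := hemb (u k) (hmem k)
    have h2 := Real.rpow_le_rpow (Real.rpow_nonneg (hInn k) _) h hp0.le
    have hLHS : ((I k) ^ ((1:ℝ)/p)) ^ p = I k := by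
      rw [← Real.rpow_mul (hInn k)]
      field_simp
      exact Real.rpow_one _
    have hRHS : (ηp * (N k) ^ ((1:ℝ)/2)) ^ p = ηp ^ p * (N k) ^ (p/2) := by
      rw [Real.mul_rpow hηp.le (Real.rpow_nonneg (hNnn k) _),
        ← Real.rpow_mul (hNnn k)]
      rw [show (1:ℝ)/2 * p = p/2 by ring]
    rw [hLHS, hRHS] at h2
    exact h2
  -- pass to the limit
  have hIlim : Tendsto I atTop (nhds (L' * c)) := by
    have := hNlim.sub hDlim
    simp only [sub_zero] at this
    exact this.congr (fun k => by simp [hDdef])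
  have hRlim : Tendsto (fun k => ηp ^ p * (N k) ^ (p/2)) atTop
      (nhds (ηp ^ p * (L' * c) ^ (p/2))) := by
    have hcont : ContinuousAt (fun x : ℝ => x ^ (p/2)) (L' * c) :=
      Real.continuousAt_rpow_const _ _ (Or.inl hL0.ne')
    exact (hcont.tendsto.comp hNlim).const_mul _
  have hkey : L' * c ≤ ηp ^ p * (L' * c) ^ (p/2) :=
    le_of_tendsto_of_tendsto' hIlim hRlim hIle
  -- derive lower bound on L' * c
  set L0 : ℝ := L' * c with hL0def
  have hηpp : (0:ℝ) < ηp ^ p := Real.rpow_pos_of_pos hηp _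
  have hL0half : L0 ^ (p/2) = L0 ^ ((p-2)/2) * L0 := by
    rw [show p/2 = (p-2)/2 + 1 by ring, Real.rpow_add hL0, Real.rpow_one]
  have hstep : (ηp ^ p)⁻¹ ≤ L0 ^ ((p-2)/2) := by
    have h1 : (1:ℝ) * L0 ≤ (ηp ^ p * L0 ^ ((p-2)/2)) * L0 := by
      rw [one_mul]
      calc L0 ≤ ηp ^ p * L0 ^ (p/2) := hkey
        _ = (ηp ^ p * L0 ^ ((p-2)/2)) * L0 := by rw [hL0half]; ring
    have h2 : (1:ℝ) ≤ ηp ^ p * L0 ^ ((p-2)/2) := le_of_mul_le_mul_right h1 hL0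
    have h3 := mul_le_mul_of_nonneg_left h2 (inv_nonneg.mpr hηpp.le)
    rwa [mul_one, ← mul_assoc, inv_mul_cancel₀ hηpp.ne', one_mul] at h3
  have h6 : ((ηp ^ p)⁻¹) ^ (2/(p-2)) ≤ L0 := by
    have := Real.rpow_le_rpow (inv_nonneg.mpr hηpp.le) hstep (by positivity : (0:ℝ) ≤ 2/(p-2))
    rwa [← Real.rpow_mul hL0.le, show (p-2)/2 * (2/(p-2)) = 1 by field_simp,
      Real.rpow_one] at this
  have h4 : (1 / (2 * ηp ^ p)) < (ηp ^ p)⁻¹ := by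
    rw [one_div]
    apply inv_strictAnti₀ hηpp
    linarith
  have h5 : (1 / (2 * ηp ^ p)) ^ (2/(p-2)) < ((ηp ^ p)⁻¹) ^ (2/(p-2)) :=
    Real.rpow_lt_rpow (by positivity) h4 (by positivity)
  have h7 : (1 / (2 * ηp ^ p)) ^ (2/(p-2)) < L' * c := lt_of_lt_of_le h5 h6
  have h8 := mul_lt_mul_of_pos_left h7 (show (0:ℝ) < (p-2)/(2*p) by positivity)
  calc (p-2)/(2*p) * (1 / (2 * ηp ^ p)) ^ (2/(p-2)) < (p-2)/(2*p) * (L' * c) := h8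
    _ = c := by rw [hL'def]; field_simp
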